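/- For every natural number n and every t ∈ ℝ with t ≠ 0, one has (2n+1)!! · (D^n f)(t) = Γ(n+3/2) · h_{n+1/2}(t²/4), where f(s) := sinh(s)/s and D is the differential operator (Df)(t) := f′(t)/t applied n times. Equivalently, B_{n+1/2}(t) = 1/( (2n+1)!! · (D^n f)(t) ) for t ≠ 0. -/

import Mathlib

open MeasureTheory

/-- Characteristic function of a measure on ℝ: `t ↦ ∫ e^{itx} dμ(x)`. -/
noncomputable def charFn (μ : Measure ℝ) (t : ℝ) : ℂ :=
  ∫ x, Complex.exp (t * x * Complex.I) ∂μ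

/-- `h_ν(u) = ∑_{k=0}^∞ u^k / (k! Γ(ν+k+1))`. -/
noncomputable def hnu (ν : ℝ) (u : ℝ) : ℝ :=
  ∑' k : ℕ, u ^ k / (Nat.factorial k * Real.Gamma (ν + k + 1))

/-- `B_ν(t) = 1/(Γ(ν+1) h_ν(t²/4)) = t^ν/(2^ν Γ(ν+1) I_ν(t))`. -/
noncomputable def Bnu (ν : ℝ) (t : ℝ) : ℝ :=
  1 / (Real.Gamma (ν + 1) * hnu ν (t ^ 2 / 4))

/-- `b_ν(t) = exp(−(t²/2)·h_{ν+1}(t²/4)/h_ν(t²/4)) = exp(−t·I_{ν+1}(t)/I_ν(t))`. -/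
noncomputable def bnu (ν : ℝ) (t : ℝ) : ℝ :=
  Real.exp (-(t ^ 2 / 2) * hnu (ν + 1) (t ^ 2 / 4) / hnu ν (t ^ 2 / 4))

/-- The `n`-fold convolution power of a measure on ℝ. -/
noncomputable def convPow (ρ : Measure ℝ) : ℕ → Measure ℝ
  | 0 => Measure.dirac 0
  | n + 1 => (convPow ρ n).conv ρ

/-- A probability measure on ℝ is infinitely divisible if for every `n ≥ 1` it is the
`n`-fold convolution of some probability measure. -/
def InfDivisible (μ : Measure ℝ) : Prop :=
  ∀ n : ℕ, 1 ≤ n → ∃ ρ : Measure ℝ, IsProbabilityMeasure ρ ∧ convPow ρ n = μ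

/-- The operator `D : f ↦ (t ↦ f′(t)/t)`. -/
noncomputable def Dop (g : ℝ → ℝ) : ℝ → ℝ := fun t => deriv g t / t

/-- `f(s) = sinh(s)/s`, extended by `f(0) = 1`. -/
noncomputable def sinhc (s : ℝ) : ℝ := if s = 0 then 1 else Real.sinh s / s


section Aux
open Real Nat

noncomputable def cc (n k : ℕ) : ℝ :=
  2 ^ n * (k + n)! / ((k)! * (2 * (k + n) + 1)!)

lemma cc_pos (n k : ℕ) : 0 < cc n k := by
  unfold cc
  positivity

lemma cc_le (n k : ℕ) : cc n k ≤ 2 ^ n / (k)! := by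
  unfold cc
  rw [div_le_div_iff₀ (by positivity) (by positivity)]
  have h1 : ((k + n)! : ℝ) ≤ ((2 * (k + n) + 1)! : ℝ) := by
    exact_mod_cast Nat.factorial_le (by omega)
  calc (2:ℝ) ^ n * (k + n)! * (k)! ≤ 2 ^ n * (2 * (k + n) + 1)! * (k)! := by
        gcongr
    _ = 2 ^ n * ((k)! * (2 * (k + n) + 1)!) := by ring

lemma cc_succ (n k : ℕ) : cc (n + 1) k = 2 * (k + 1) * cc n (k + 1) := by
  unfold cc
  have e1 : k + 1 + n = k + (n + 1) := by ring
  rw [e1]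
  have e2 : ((k+1)! : ℝ) = (k + 1) * (k)! := by exact_mod_cast Nat.factorial_succ k
  rw [e2]
  have h1 : ((k)! : ℝ) ≠ 0 := by positivity
  have h2 : ((2 * (k + (n+1)) + 1)! : ℝ) ≠ 0 := by positivity
  field_simp
  ring

lemma summable_S (n : ℕ) (t : ℝ) : Summable (fun k => cc n k * t ^ (2 * k)) := by
  apply Summable.of_norm_bounded (g := fun k => 2 ^ n * ((t ^ 2) ^ k / (k)!))
    ((Real.summable_pow_div_factorial (t ^ 2)).mul_left _)
  intro k
  have h1 : ‖cc n k * t ^ (2 * k)‖ = cc n k * (t ^ 2) ^ k := by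
    rw [norm_mul, Real.norm_eq_abs, Real.norm_eq_abs, abs_of_pos (cc_pos n k),
      pow_mul, abs_pow, abs_of_nonneg (sq_nonneg t)]
  rw [h1]
  have h2 : (0:ℝ) ≤ (t ^ 2) ^ k := by positivity
  calc cc n k * (t ^ 2) ^ k ≤ (2 ^ n / (k)!) * (t ^ 2) ^ k := by
        gcongr
        exact cc_le n k
    _ = 2 ^ n * ((t ^ 2) ^ k / (k)!) := by ring

lemma deriv_bound (n k : ℕ) {y R : ℝ} (h : |y| ≤ R) (hR : 1 ≤ R) :
    ‖cc n k * ((2 * k : ℕ) * y ^ (2 * k - 1))‖ ≤ 2 ^ (n + 1) * ((2 * R ^ 2) ^ k / (k)!) := by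
  have hR0 : (0:ℝ) ≤ R := le_trans zero_le_one hR
  have h1 : ‖cc n k * ((2 * k : ℕ) * y ^ (2 * k - 1))‖
      = cc n k * ((2 * k) * |y| ^ (2 * k - 1)) := by
    rw [norm_mul, norm_mul, norm_pow, Real.norm_eq_abs, Real.norm_eq_abs, Real.norm_eq_abs,
      abs_of_pos (cc_pos n k)]
    push_cast
    rw [abs_of_nonneg (by positivity : (0:ℝ) ≤ (2 * k : ℝ))]
  rw [h1]
  have h2 : |y| ^ (2 * k - 1) ≤ R ^ (2 * k) := by
    calc |y| ^ (2 * k - 1) ≤ R ^ (2 * k - 1) := by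
          exact pow_le_pow_left₀ (abs_nonneg y) h _
      _ ≤ R ^ (2 * k) := pow_le_pow_right₀ hR (by omega)
  have h3 : (2 * k : ℝ) ≤ 2 * 2 ^ k := by
    have := Nat.lt_two_pow_self (n := k)
    have : (k : ℝ) ≤ 2 ^ k := by exact_mod_cast this.le
    linarith
  calc cc n k * ((2 * k) * |y| ^ (2 * k - 1))
      ≤ (2 ^ n / (k)!) * ((2 * 2 ^ k) * R ^ (2 * k)) := by
        apply mul_le_mul (cc_le n k) ?_ (by positivity) (by positivity)
        apply mul_le_mul h3 h2 (by positivity) (by positivity)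
    _ = 2 ^ (n + 1) * ((2 * R ^ 2) ^ k / (k)!) := by
        rw [mul_pow, pow_mul]
        ring

lemma S_hasDerivAt (n : ℕ) (x : ℝ) :
    HasDerivAt (fun y => ∑' k, cc n k * y ^ (2 * k))
      (∑' k, cc n k * ((2 * k : ℕ) * x ^ (2 * k - 1))) x := by
  set R : ℝ := |x| + 1 with hRdef
  have hR : 1 ≤ R := by
    have := abs_nonneg x
    simp only [hRdef]
    linarith
  apply hasDerivAt_tsum_of_isPreconnected
    (u := fun k => 2 ^ (n + 1) * ((2 * R ^ 2) ^ k / (k)!))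
    (g' := fun k y => cc n k * ((2 * k : ℕ) * y ^ (2 * k - 1)))
    (t := Metric.ball (0:ℝ) R) (y₀ := x)
    (((Real.summable_pow_div_factorial (2 * R ^ 2)).mul_left _))
    Metric.isOpen_ball ((convex_ball (0:ℝ) R).isPreconnected)
  · intro k y _
    exact (hasDerivAt_pow (2 * k) y).const_mul (cc n k)
  · intro k y hy
    have : |y| ≤ R := by
      rw [Metric.mem_ball, Real.dist_eq, sub_zero] at hy
      exact hy.le
    exact deriv_bound n k this hR
  · simp only [Metric.mem_ball, Real.dist_eq, sub_zero, hRdef]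
    linarith [abs_nonneg x]
  · exact summable_S n x
  · simp only [Metric.mem_ball, Real.dist_eq, sub_zero, hRdef]
    linarith [abs_nonneg x]

lemma summable_S' (n : ℕ) (x : ℝ) :
    Summable (fun k => cc n k * ((2 * k : ℕ) * x ^ (2 * k - 1))) := by
  set R : ℝ := |x| + 1 with hRdef
  have hR : 1 ≤ R := by
    have := abs_nonneg x
    simp only [hRdef]; linarith
  apply Summable.of_norm_bounded (g := fun k => 2 ^ (n + 1) * ((2 * R ^ 2) ^ k / (k)!))
    ((Real.summable_pow_div_factorial (2 * R ^ 2)).mul_left _)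
  intro k
  exact deriv_bound n k (by simp only [hRdef]; linarith [abs_nonneg x]) hR

lemma key (n : ℕ) : ∀ t : ℝ, t ≠ 0 → (Dop^[n] sinhc) t = ∑' k, cc n k * t ^ (2 * k) := by
  induction n with
  | zero =>
    intro t ht
    simp only [Function.iterate_zero, id_eq]
    rw [sinhc, if_neg ht, Real.sinh_eq_tsum, ← tsum_div_const]
    apply tsum_congr
    intro k
    rw [cc]
    have h1 : ((k)! : ℝ) ≠ 0 := by positivity
    have h2 : ((2 * (k + 0) + 1)! : ℝ) ≠ 0 := by positivity
    rw [pow_succ]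
    field_simp
    ring
  | succ n ih =>
    intro t ht
    rw [Function.iterate_succ_apply', Dop]
    have hmem : {(0:ℝ)}ᶜ ∈ nhds t := compl_singleton_mem_nhds ht
    have hEq : (Dop^[n] sinhc) =ᶠ[nhds t] (fun y => ∑' k, cc n k * y ^ (2 * k)) :=
      Filter.eventuallyEq_of_mem hmem (fun x hx => ih x hx)
    rw [hEq.deriv_eq, (S_hasDerivAt n t).deriv]
    -- reindex
    have hsum := summable_S' n t
    rw [Summable.tsum_eq_zero_add hsum]
    simp only [Nat.mul_zero, Nat.cast_ofNat, Nat.cast_zero, CharP.cast_eq_zero, zero_mul,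
      mul_zero, zero_add]
    have : ∀ k : ℕ, cc n (k + 1) * ((2 * (k + 1) : ℕ) * t ^ (2 * (k + 1) - 1))
        = (cc (n + 1) k * t ^ (2 * k)) * t := by
      intro k
      rw [cc_succ n k]
      have : 2 * (k + 1) - 1 = 2 * k + 1 := by omega
      rw [this, pow_succ]
      push_cast
      ring
    rw [tsum_congr this, tsum_mul_right]
    field_simp

lemma fact_odd (m : ℕ) : ((2 * m + 1)! : ℝ) = (2 * m + 1)‼ * (2 ^ m * (m)!) := by
  have h1 : (2 * m + 1)! = (2 * m + 1)‼ * (2 * m)‼ := Nat.factorial_eq_mul_doubleFactorial (2 * m)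
  have h2 : (2 * m)‼ = 2 ^ m * (m)! := Nat.doubleFactorial_two_mul m
  rw [h1, h2]
  push_cast
  ring

lemma Gamma_half (n : ℕ) : Real.Gamma (n + 1 / 2) = Real.sqrt π * (2 * n)! / (4 ^ n * (n)!) := by
  induction n with
  | zero =>
    rw [show ((0:ℕ):ℝ) + 1 / 2 = 1 / 2 by norm_num, Real.Gamma_one_half_eq]
    simp
  | succ n ih =>
    have h0 : ((n : ℝ) + 1 / 2) ≠ 0 := by positivity
    have h1 : (((n + 1 : ℕ)):ℝ) + 1 / 2 = ((n:ℝ) + 1 / 2) + 1 := by push_cast; ring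
    rw [h1, Real.Gamma_add_one h0, ih]
    have h2 : ((2 * (n + 1))! : ℝ) = (2 * n + 2) * ((2 * n + 1) * (2 * n)!) := by
      have e : 2 * (n + 1) = (2 * n + 1) + 1 := by ring
      rw [e, Nat.factorial_succ, Nat.factorial_succ]
      push_cast
      ring
    have h3 : (((n + 1):ℕ)! : ℝ) = ((n:ℝ) + 1) * (n)! := by
      rw [Nat.factorial_succ]
      push_cast
      ring
    rw [h2, h3]
    have h4 : ((n)! : ℝ) ≠ 0 := by positivity
    have h5 : (4:ℝ) ^ n ≠ 0 := by positivity
    rw [pow_succ]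
    field_simp
    ring

lemma fact_even (m : ℕ) : ((2 * (m + 1))! : ℝ) = (2 * m + 2) * ((2 * m + 1)‼ * (2 ^ m * (m)!)) := by
  have e : 2 * (m + 1) = (2 * m + 1) + 1 := by ring
  rw [e, Nat.factorial_succ, Nat.cast_mul, fact_odd]
  push_cast
  ring

lemma term_eq (n k : ℕ) (t : ℝ) :
    Real.Gamma ((n : ℝ) + 3 / 2) * ((t ^ 2 / 4) ^ k / ((k)! * Real.Gamma ((n : ℝ) + 1 / 2 + k + 1)))
      = ((2 * n + 1)‼ : ℝ) * (cc n k * t ^ (2 * k)) := by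
  have e1 : ((n : ℝ) + 3 / 2) = ((n + 1 : ℕ) : ℝ) + 1 / 2 := by push_cast; ring
  have e2 : ((n : ℝ) + 1 / 2 + k + 1) = ((n + k + 1 : ℕ) : ℝ) + 1 / 2 := by push_cast; ring
  rw [e1, e2, Gamma_half, Gamma_half, cc]
  have e3 : 2 * (n + 1) = 2 * (n + 1) := rfl
  rw [show (2 * (n + 1)) = 2 * (n + 1) from rfl]
  rw [fact_even n, show n + k + 1 = (n + k) + 1 from rfl, fact_even (n + k)]
  rw [fact_odd (k + n)]
  have hs : Real.sqrt π ≠ 0 := (Real.sqrt_pos.mpr Real.pi_pos).ne'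
  have hk : ((k)! : ℝ) ≠ 0 := by positivity
  have hn : ((n)! : ℝ) ≠ 0 := by positivity
  have hnk : (((n + k))! : ℝ) ≠ 0 := by positivity
  have hn1 : (((n + 1))! : ℝ) ≠ 0 := by positivity
  have hd1 : (((2 * n + 1)‼ : ℕ) : ℝ) ≠ 0 := by
    exact_mod_cast (Nat.doubleFactorial_pos _).ne'
  have hd2 : (((2 * (n + k) + 1)‼ : ℕ) : ℝ) ≠ 0 := by
    exact_mod_cast (Nat.doubleFactorial_pos _).ne'
  have e4 : (4:ℝ) ^ (n + 1) = 2 ^ (n + 1) * 2 ^ (n + 1) := by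
    rw [show (4:ℝ) = 2 * 2 by norm_num, mul_pow]
  have e5 : (4:ℝ) ^ (n + k + 1) = 2 ^ (n + k + 1) * 2 ^ (n + k + 1) := by
    rw [show (4:ℝ) = 2 * 2 by norm_num, mul_pow]
  have e6 : (t ^ 2 / 4) ^ k = t ^ (2 * k) / (2 ^ k * 2 ^ k) := by
    rw [div_pow, ← pow_mul, show (4:ℝ) = 2 * 2 by norm_num, mul_pow]
  have e7 : (2 * (k + n) + 1)‼ = (2 * (n + k) + 1)‼ := by rw [Nat.add_comm k n]
  have e8 : ((k + n)! : ℝ) = ((n + k)! : ℝ) := by rw [Nat.add_comm k n]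
  rw [e4, e5, e6, e7, e8]
  have f1 : (((n + 1))! : ℝ) = (n + 1) * (n)! := by
    rw [Nat.factorial_succ]; push_cast; ring
  have f2 : (((n + k + 1))! : ℝ) = (n + k + 1) * ((n + k))! := by
    rw [Nat.factorial_succ]; push_cast; ring
  rw [f1, f2, pow_succ (2:ℝ) (n + k), pow_add (2:ℝ) n k, pow_succ (2:ℝ) n]
  field_simp
  push_cast
  ring

end Aux
open Nat in
theorem stmt18 (n : ℕ) (t : ℝ) (ht : t ≠ 0) :
    ((Nat.doubleFactorial (2 * n + 1) : ℝ)) * (Dop^[n] sinhc) t =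
      Real.Gamma (n + 3 / 2) * hnu (n + 1 / 2) (t ^ 2 / 4) ∧
    Bnu (n + 1 / 2) t =
      1 / ((Nat.doubleFactorial (2 * n + 1) : ℝ) * (Dop^[n] sinhc) t) := by
  have h1 : ((Nat.doubleFactorial (2 * n + 1) : ℝ)) * (Dop^[n] sinhc) t =
      Real.Gamma (n + 3 / 2) * hnu (n + 1 / 2) (t ^ 2 / 4) := by
    rw [key n t ht, hnu, ← tsum_mul_left, ← tsum_mul_left]
    exact tsum_congr fun k => (term_eq n k t).symm
  refine ⟨h1, ?_⟩
  rw [Bnu, show ((n:ℝ) + 1 / 2 + 1) = (n:ℝ) + 3 / 2 by ring, ← h1]
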